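/- Let M be a matroid on a finite nonempty ground set L with rank function ρ. Define S_0 = ∅ and, iteratively for i ≥ 1, let B_i be the maximal set X ⊆ L \ S_{i−1} minimizing (ρ(X ∪ S_{i−1}) − ρ(S_{i−1}))/|X|, and set S_i = S_{i−1} ∪ B_i, stopping at the first k with S_k = L. Then for every maxmin-fair distribution F over the independent sets of M, every i ∈ {1,…,k} and every u ∈ B_i, the satisfaction probability of u equals λ_i = (ρ(S_i) − ρ(S_{i−1}))/|B_i|. -/

import Mathlib

open scoped Classical

variable {α : Type*}

/-- `p` is a probability distribution over the feasible solutions `sol`. -/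
def IsDistrib [Fintype α] (sol : Finset α → Prop) (p : Finset α → ℝ) : Prop :=
  (∀ A, 0 ≤ p A) ∧ (∀ A, p A ≠ 0 → sol A) ∧ (∑ A : Finset α, p A) = 1

/-- The satisfaction probability of individual `u` under the distribution `p`. -/
def sat [Fintype α] [DecidableEq α] (p : Finset α → ℝ) (u : α) : ℝ :=
  ∑ A : Finset α, if u ∈ A then p A else 0

/-- `F` is a maxmin-fair distribution over the feasible solutions `sol`. -/
def MaxminFair [Fintype α] [DecidableEq α] (sol : Finset α → Prop) (F : Finset α → ℝ) : Prop :=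
  IsDistrib sol F ∧
    ∀ D, IsDistrib sol D → ∀ u, sat F u < sat D u →
      ∃ v, sat D v < sat F v ∧ sat F v ≤ sat F u

/-- The rank of the finite set `X` in the matroid `M`. -/
noncomputable def rnk [Fintype α] (M : Matroid α) (X : Finset α) : ℕ :=
  (X.powerset.filter fun A : Finset α => M.Indep (A : Set α)).sup Finset.card

/-- `X` is a nonempty subset of `L \ S₀` minimizing the ratio
`(ρ(X ∪ S₀) − ρ(S₀)) / |X|`. -/
def MinRatioSet [Fintype α] [DecidableEq α] (M : Matroid α) (S₀ X : Finset α) : Prop :=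
  X.Nonempty ∧ X ⊆ Finset.univ \ S₀ ∧
    ∀ Y : Finset α, Y.Nonempty → Y ⊆ Finset.univ \ S₀ →
      ((rnk M (X ∪ S₀) : ℝ) - (rnk M S₀ : ℝ)) / (X.card : ℝ) ≤
        ((rnk M (Y ∪ S₀) : ℝ) - (rnk M S₀ : ℝ)) / (Y.card : ℝ)

/-! ### Auxiliary lemmas about `rnk` -/

lemma indep_card_le_rnk [Fintype α] (M : Matroid α) {A X : Finset α}
    (hA : M.Indep (A : Set α)) (hAX : A ⊆ X) : A.card ≤ rnk M X :=
  Finset.le_sup (by rw [Finset.mem_filter, Finset.mem_powerset]; exact ⟨hAX, hA⟩)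

lemma rnk_le_of_forall [Fintype α] (M : Matroid α) {X : Finset α} {n : ℕ}
    (h : ∀ A : Finset α, A ⊆ X → M.Indep (A : Set α) → A.card ≤ n) : rnk M X ≤ n := by
  apply Finset.sup_le
  intro A hA
  rw [Finset.mem_filter, Finset.mem_powerset] at hA
  exact h A hA.1 hA.2

lemma rnk_empty [Fintype α] (M : Matroid α) : rnk M (∅ : Finset α) = 0 :=
  Nat.le_antisymm (rnk_le_of_forall M fun A hA _ => by
    simp [Finset.subset_empty.1 hA]) (Nat.zero_le _)

lemma rnk_union_le [Fintype α] [DecidableEq α] (M : Matroid α) (X Y : Finset α) :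
    rnk M (X ∪ Y) ≤ rnk M X + Y.card := by
  apply rnk_le_of_forall
  intro A hA hAind
  have h1 : (A ∩ X).card ≤ rnk M X :=
    indep_card_le_rnk M (hAind.subset (by exact_mod_cast Finset.inter_subset_left))
      Finset.inter_subset_right
  have h2 : (A \ X).card ≤ Y.card := by
    apply Finset.card_le_card
    intro a ha
    rw [Finset.mem_sdiff] at ha
    rcases Finset.mem_union.1 (hA ha.1) with h | h
    · exact absurd h ha.2
    · exact h
  calc A.card = (A ∩ X).card + (A \ X).card := (Finset.card_inter_add_card_sdiff A X).symm
    _ ≤ rnk M X + Y.card := Nat.add_le_add h1 h2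

lemma rnk_le_of_subset_closure [Fintype α] {M : Matroid α} (hE : M.E = Set.univ)
    {W X : Finset α} (h : (W : Set α) ⊆ M.closure (X : Set α)) : rnk M W ≤ rnk M X := by
  apply rnk_le_of_forall
  intro A hAW hAind
  obtain ⟨J, hJ⟩ := M.exists_isBasis (X : Set α) (by rw [hE]; exact Set.subset_univ _)
  have hJfin : J.Finite := (X.finite_toSet).subset hJ.subset
  have hencard : (A : Set α).encard ≤ J.encard := by
    by_contra hlt
    push_neg at hlt
    obtain ⟨e, he, hins⟩ := hJ.indep.augment hAind hlt
    have hJcl : M.IsBasis J (M.closure (X : Set α)) := hJ.isBasis_closure_right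
    have hsub : insert e J ⊆ M.closure (X : Set α) := by
      apply Set.insert_subset
      · exact h (hAW he.1)
      · exact hJ.subset.trans (M.subset_closure (X : Set α)
          (by rw [hE]; exact Set.subset_univ _))
    have := hJcl.eq_of_subset_indep hins (Set.subset_insert e J) hsub
    exact he.2 (by rw [this]; exact Set.mem_insert e J)
  have hJcard : J.encard = (hJfin.toFinset.card : ℕ∞) := by
    rw [← Set.encard_coe_eq_coe_finsetCard, hJfin.coe_toFinset]
  rw [Set.encard_coe_eq_coe_finsetCard, hJcard, Nat.cast_le] at hencard
  refine hencard.trans (indep_card_le_rnk M ?_ ?_)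
  · rw [hJfin.coe_toFinset]; exact hJ.indep
  · intro x hx
    have : x ∈ J := by rwa [← hJfin.mem_toFinset]
    exact_mod_cast hJ.subset this

/-! ### Auxiliary lemmas about sums and `sat` -/

lemma sum_ite_indicator [Fintype α] [DecidableEq α] (A : Finset α) (u : α) :
    ∑ X : Finset α, (if u ∈ X then (if X = A then (1 : ℝ) else 0) else 0) =
      if u ∈ A then (1 : ℝ) else 0 := by
  rw [Finset.sum_eq_single A]
  · simp
  · intro b _ hb; simp [hb]
  · simp

lemma sum_sat [Fintype α] [DecidableEq α] (p : Finset α → ℝ) (T : Finset α) :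
    ∑ t ∈ T, sat p t = ∑ A : Finset α, p A * ((A ∩ T).card : ℝ) := by
  simp only [sat]
  rw [Finset.sum_comm]
  refine Finset.sum_congr rfl fun A _ => ?_
  rw [Finset.sum_ite_mem, Finset.sum_const, nsmul_eq_mul, Finset.inter_comm, mul_comm]

lemma eq_of_forall_le_of_sum_le {s : Finset α} {f : α → ℝ} {c : ℝ}
    (hle : ∀ x ∈ s, c ≤ f x) (hsum : ∑ x ∈ s, f x ≤ c * s.card) :
    ∀ x ∈ s, f x = c := by
  by_contra h
  push_neg at h
  obtain ⟨x, hx, hne⟩ := h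
  have hlt : ∑ _x ∈ s, c < ∑ x ∈ s, f x :=
    Finset.sum_lt_sum hle ⟨x, hx, lt_of_le_of_ne (hle x hx) (Ne.symm hne)⟩
  rw [Finset.sum_const, nsmul_eq_mul] at hlt
  nlinarith [hlt, hsum]

lemma sum_sat_le_rnk [Fintype α] [DecidableEq α] {M : Matroid α} {F : Finset α → ℝ}
    (hd : IsDistrib (fun A : Finset α => M.Indep (A : Set α)) F) (X : Finset α) :
    ∑ v ∈ X, sat F v ≤ (rnk M X : ℝ) := by
  rw [sum_sat]
  have h1 : (rnk M X : ℝ) = ∑ A : Finset α, F A * (rnk M X : ℝ) := by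
    rw [← Finset.sum_mul, hd.2.2, one_mul]
  rw [h1]
  apply Finset.sum_le_sum
  intro A _
  by_cases hA0 : F A = 0
  · simp [hA0]
  · refine mul_le_mul_of_nonneg_left ?_ (hd.1 A)
    have hsub1 : ((A ∩ X : Finset α) : Set α) ⊆ (A : Set α) := by
      exact_mod_cast (Finset.inter_subset_left : A ∩ X ⊆ A)
    have := indep_card_le_rnk M ((hd.2.1 A hA0).subset hsub1)
      (Finset.inter_subset_right : A ∩ X ⊆ X)
    exact_mod_cast this

/-! ### The key exchange consequence of maxmin-fairness -/

lemma fair_shift [Fintype α] [DecidableEq α] {M : Matroid α} {F : Finset α → ℝ}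
    (hF : MaxminFair (fun A : Finset α => M.Indep (A : Set α)) F)
    {A₀ A₁ : Finset α} (h0 : F A₀ ≠ 0) (h1 : M.Indep (A₁ : Set α)) (hne : A₀ ≠ A₁)
    {t : α} (ht1 : t ∈ A₁) (ht0 : t ∉ A₀) :
    ∃ v, v ∈ A₀ ∧ v ∉ A₁ ∧ sat F v ≤ sat F t := by
  obtain ⟨⟨hpos, hsupp, hsum⟩, hfair⟩ := hF
  have hc : 0 < F A₀ := lt_of_le_of_ne (hpos A₀) (Ne.symm h0)
  set c := F A₀ with hcdef
  set D : Finset α → ℝ := fun X => F X +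
    c * ((if X = A₁ then (1:ℝ) else 0) - (if X = A₀ then (1:ℝ) else 0)) with hD
  have hsat : ∀ u, sat D u = sat F u +
      c * ((if u ∈ A₁ then (1:ℝ) else 0) - (if u ∈ A₀ then (1:ℝ) else 0)) := by
    intro u
    have hterm : ∀ X : Finset α, (if u ∈ X then D X else 0) =
        (if u ∈ X then F X else 0) +
        c * ((if u ∈ X then (if X = A₁ then (1:ℝ) else 0) else 0)
           - (if u ∈ X then (if X = A₀ then (1:ℝ) else 0) else 0)) := by
      intro X
      by_cases h : u ∈ X <;> simp [h, hD]
    simp only [sat]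
    rw [Finset.sum_congr rfl fun X _ => hterm X, Finset.sum_add_distrib, ← Finset.mul_sum,
      Finset.sum_sub_distrib, sum_ite_indicator, sum_ite_indicator]
  have hDdist : IsDistrib (fun A : Finset α => M.Indep (A : Set α)) D := by
    refine ⟨?_, ?_, ?_⟩
    · intro X
      simp only [hD]
      split_ifs with hX1 hX0 hX0
      · have := hpos X; linarith
      · have := hpos X; linarith
      · have hcX : c = F X := by rw [hcdef, hX0]
        linarith
      · have := hpos X; linarith
    · intro X hX
      by_cases h1' : X = A₁
      · exact h1' ▸ h1
      · by_cases h0' : X = A₀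
        · exfalso
          apply hX
          simp only [hD, if_neg h1', if_pos h0']
          have hcX : c = F X := by rw [hcdef, h0']
          linarith
        · apply hsupp
          have hDX : D X = F X := by simp [hD, h0', h1']
          rwa [hDX] at hX
    · have e1 : ∑ X : Finset α, (if X = A₁ then (1:ℝ) else 0) = 1 := by simp
      have e0 : ∑ X : Finset α, (if X = A₀ then (1:ℝ) else 0) = 1 := by simp
      simp only [hD]
      rw [Finset.sum_add_distrib, ← Finset.mul_sum, Finset.sum_sub_distrib, e1, e0, hsum]
      ring
  have ht : sat F t < sat D t := by
    rw [hsat t, if_pos ht1, if_neg ht0]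
    linarith
  obtain ⟨v, hv1, hv2⟩ := hfair D hDdist t ht
  rw [hsat v] at hv1
  by_cases hv0 : v ∈ A₀
  · by_cases hvA1 : v ∈ A₁
    · exfalso; rw [if_pos hvA1, if_pos hv0] at hv1; linarith
    · exact ⟨v, hv0, hvA1, hv2⟩
  · exfalso
    by_cases hvA1 : v ∈ A₁
    · rw [if_pos hvA1, if_neg hv0] at hv1; linarith
    · rw [if_neg hvA1, if_neg hv0] at hv1; linarith

/-! ### The lower bound from fairness and the min-ratio property -/

lemma sat_lower [Fintype α] [DecidableEq α] {M : Matroid α} (hE : M.E = Set.univ)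
    {F : Finset α → ℝ} (hF : MaxminFair (fun A : Finset α => M.Indep (A : Set α)) F)
    {S₀ Bi : Finset α} (hB : MinRatioSet M S₀ Bi) :
    ∀ v ∉ S₀, ((rnk M (Bi ∪ S₀) : ℝ) - (rnk M S₀ : ℝ)) / (Bi.card : ℝ) ≤ sat F v := by
  set l := ((rnk M (Bi ∪ S₀) : ℝ) - (rnk M S₀ : ℝ)) / (Bi.card : ℝ) with hl
  by_contra h
  push_neg at h
  obtain ⟨v₀, hv₀S, hv₀⟩ := h
  set T := Finset.univ.filter (fun v => v ∉ S₀ ∧ sat F v < l) with hT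
  have hmemT : ∀ v, v ∈ T ↔ v ∉ S₀ ∧ sat F v < l := by
    intro v; simp [hT]
  have hTne : T.Nonempty := ⟨v₀, (hmemT v₀).2 ⟨hv₀S, hv₀⟩⟩
  have hTsub : T ⊆ Finset.univ \ S₀ := fun v hv =>
    Finset.mem_sdiff.2 ⟨Finset.mem_univ v, ((hmemT v).1 hv).1⟩
  have hTpos : (0:ℝ) < (T.card : ℝ) := by exact_mod_cast Finset.card_pos.2 hTne
  have hratio := hB.2.2 T hTne hTsub
  have hlT : l * (T.card : ℝ) ≤ (rnk M (T ∪ S₀) : ℝ) - (rnk M S₀ : ℝ) := by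
    have h2 := mul_le_mul_of_nonneg_right hratio hTpos.le
    rwa [div_mul_cancel₀ _ hTpos.ne'] at h2
  -- each support set `A` satisfies `rnk (T ∪ S₀) ≤ rnk S₀ + |A ∩ T|`
  have hspan : ∀ A : Finset α, F A ≠ 0 → rnk M (T ∪ S₀) ≤ rnk M S₀ + (A ∩ T).card := by
    intro A hA0
    have hAind : M.Indep (A : Set α) := hF.1.2.1 A hA0
    set Z := S₀ ∪ T with hZ
    have hcl : ∀ t ∈ T, (t : α) ∈ M.closure ((A ∩ Z : Finset α) : Set α) := by
      intro t htT
      by_cases htA : t ∈ A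
      · refine M.subset_closure _ (by rw [hE]; exact Set.subset_univ _) ?_
        have : t ∈ A ∩ Z := Finset.mem_inter.2 ⟨htA, Finset.mem_union_right _ htT⟩
        exact_mod_cast this
      · have hAZind : M.Indep ((A ∩ Z : Finset α) : Set α) :=
          hAind.subset (by exact_mod_cast Finset.inter_subset_left)
        by_contra hclt
        have htAZ : t ∉ A ∩ Z := fun hmem => htA (Finset.mem_inter.1 hmem).1
        have hins : M.Indep ((insert t (A ∩ Z) : Finset α) : Set α) := by
          rw [Finset.coe_insert,
            hAZind.insert_indep_iff_of_notMem (by exact_mod_cast htAZ)]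
          exact ⟨by rw [hE]; trivial, hclt⟩
        obtain ⟨w, hw0, hw1, hwsat⟩ := fair_shift hF hA0 hins
          (fun hEq => htA (by rw [hEq]; exact Finset.mem_insert_self t _))
          (Finset.mem_insert_self t _) htA
        have hwZ : w ∉ Z := fun hwZ =>
          hw1 (Finset.mem_insert_of_mem (Finset.mem_inter.2 ⟨hw0, hwZ⟩))
        have hwT : w ∈ T := (hmemT w).2
          ⟨fun hwS => hwZ (Finset.mem_union_left _ hwS),
            lt_of_le_of_lt hwsat ((hmemT t).1 htT).2⟩
        exact hwZ (Finset.mem_union_right _ hwT)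
    have hsub : ((T ∪ S₀ : Finset α) : Set α) ⊆
        M.closure ((S₀ ∪ A ∩ T : Finset α) : Set α) := by
      intro x hx
      have hx' : x ∈ T ∪ S₀ := by exact_mod_cast hx
      rcases Finset.mem_union.1 hx' with hxT | hxS
      · refine M.closure_subset_closure ?_ (hcl x hxT)
        intro y hy
        have hy' : y ∈ A ∩ Z := by exact_mod_cast hy
        rw [Finset.mem_inter] at hy'
        rcases Finset.mem_union.1 hy'.2 with h | h
        · exact_mod_cast Finset.mem_union_left _ h
        · exact_mod_cast Finset.mem_union_right _ (Finset.mem_inter.2 ⟨hy'.1, h⟩)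
      · refine M.subset_closure _ (by rw [hE]; exact Set.subset_univ _) ?_
        exact_mod_cast Finset.mem_union_left _ hxS
    calc rnk M (T ∪ S₀) ≤ rnk M (S₀ ∪ A ∩ T) := rnk_le_of_subset_closure hE hsub
      _ ≤ rnk M S₀ + (A ∩ T).card := rnk_union_le M S₀ (A ∩ T)
  -- summing over T gives a contradiction
  have hsum1 : (rnk M (T ∪ S₀) : ℝ) - (rnk M S₀ : ℝ) ≤ ∑ t ∈ T, sat F t := by
    rw [sum_sat]
    have h1 : (rnk M (T ∪ S₀) : ℝ) - (rnk M S₀ : ℝ) =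
        ∑ A : Finset α, F A * ((rnk M (T ∪ S₀) : ℝ) - (rnk M S₀ : ℝ)) := by
      rw [← Finset.sum_mul, hF.1.2.2, one_mul]
    rw [h1]
    apply Finset.sum_le_sum
    intro A _
    by_cases hA0 : F A = 0
    · simp [hA0]
    · refine mul_le_mul_of_nonneg_left ?_ (hF.1.1 A)
      have h2 := hspan A hA0
      have h3 : (rnk M (T ∪ S₀) : ℝ) ≤ (rnk M S₀ : ℝ) + ((A ∩ T).card : ℝ) := by
        exact_mod_cast h2
      linarith
  have hsum2 : ∑ t ∈ T, sat F t < l * (T.card : ℝ) := by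
    calc ∑ t ∈ T, sat F t < ∑ _t ∈ T, l :=
          Finset.sum_lt_sum_of_nonempty hTne (fun t ht => ((hmemT t).1 ht).2)
      _ = l * (T.card : ℝ) := by rw [Finset.sum_const, nsmul_eq_mul, mul_comm]
  linarith

/-- Let `M` be a matroid on a finite nonempty ground set (the whole type `α`).
Define `S 0 = ∅` and, iteratively, let `B i` be a maximal set `X ⊆ univ \ S (i-1)`
minimizing `(rnk (X ∪ S (i-1)) − rnk (S (i-1))) / |X|`, and `S i = S (i-1) ∪ B i`,
stopping at the first `k` with `S k = univ`.  Then under every maxmin-fair distribution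
`F` over the independent sets of `M`, the satisfaction probability of every `u ∈ B i`
equals `λ i = (rnk (S i) − rnk (S (i-1))) / |B i|`. -/
theorem maxminFair_sat_on_blocks_matroid [Fintype α] [DecidableEq α] [Nonempty α]
    (M : Matroid α) (hE : M.E = Set.univ)
    (k : ℕ) (hk : 1 ≤ k) (B S : ℕ → Finset α)
    (hS0 : S 0 = ∅) (hSk : S k = Finset.univ)
    (hSfirst : ∀ i, 1 ≤ i → i < k → S i ≠ Finset.univ)
    (hSi : ∀ i, 1 ≤ i → i ≤ k → S i = S (i - 1) ∪ B i)
    (hBmin : ∀ i, 1 ≤ i → i ≤ k → MinRatioSet M (S (i - 1)) (B i))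
    (hBmax : ∀ i, 1 ≤ i → i ≤ k →
      ∀ X : Finset α, MinRatioSet M (S (i - 1)) X → B i ⊆ X → X = B i)
    (F : Finset α → ℝ)
    (hF : MaxminFair (fun A : Finset α => M.Indep (A : Set α)) F) :
    ∀ i, 1 ≤ i → i ≤ k → ∀ u ∈ B i,
      sat F u = ((rnk M (S i) : ℝ) - (rnk M (S (i - 1)) : ℝ)) / ((B i).card : ℝ) := by
  suffices main : ∀ i, i ≤ k →
      (∀ j, 1 ≤ j → j ≤ i → ∀ u ∈ B j,
        sat F u = ((rnk M (S j) : ℝ) - (rnk M (S (j - 1)) : ℝ)) / ((B j).card : ℝ)) ∧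
      (∑ v ∈ S i, sat F v) = (rnk M (S i) : ℝ) by
    intro i hi1 hik u hu
    exact (main i hik).1 i hi1 le_rfl u hu
  intro i
  induction i with
  | zero =>
    intro _
    refine ⟨fun j hj1 hj0 => absurd (hj1.trans hj0) (by omega), ?_⟩
    rw [hS0, rnk_empty]
    simp
  | succ n ih =>
    intro hnk
    obtain ⟨ih1, ih2⟩ := ih (Nat.le_of_succ_le hnk)
    have h1n : 1 ≤ n + 1 := by omega
    have hidx : n + 1 - 1 = n := rfl
    have hmin : MinRatioSet M (S n) (B (n + 1)) := by
      have := hBmin (n + 1) h1n hnk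
      rwa [hidx] at this
    have hSeq : S (n + 1) = S n ∪ B (n + 1) := by
      have := hSi (n + 1) h1n hnk
      rwa [hidx] at this
    have hunion : B (n + 1) ∪ S n = S (n + 1) := by rw [hSeq, Finset.union_comm]
    set l := ((rnk M (S (n + 1)) : ℝ) - (rnk M (S n) : ℝ)) / (((B (n + 1)).card : ℝ)) with hl
    have hdisj : Disjoint (S n) (B (n + 1)) := by
      rw [Finset.disjoint_right]
      intro x hx
      exact (Finset.mem_sdiff.1 (hmin.2.1 hx)).2
    have hlow : ∀ v ∈ B (n + 1), l ≤ sat F v := by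
      intro v hv
      have hvS : v ∉ S n := (Finset.mem_sdiff.1 (hmin.2.1 hv)).2
      have := sat_lower hE hF hmin v hvS
      rwa [hunion] at this
    have hcard : (0:ℝ) < ((B (n + 1)).card : ℝ) := by
      exact_mod_cast Finset.card_pos.2 hmin.1
    have hlc : l * ((B (n + 1)).card : ℝ) = (rnk M (S (n + 1)) : ℝ) - (rnk M (S n) : ℝ) :=
      div_mul_cancel₀ _ hcard.ne'
    have hupper : ∑ v ∈ S (n + 1), sat F v ≤ (rnk M (S (n + 1)) : ℝ) :=
      sum_sat_le_rnk hF.1 (S (n + 1))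
    have hsplit : ∑ v ∈ S (n + 1), sat F v = (∑ v ∈ S n, sat F v) + ∑ v ∈ B (n + 1), sat F v := by
      rw [hSeq, Finset.sum_union hdisj]
    have hBsum : ∑ v ∈ B (n + 1), sat F v ≤ l * ((B (n + 1)).card : ℝ) := by
      rw [hlc]
      have := hupper
      rw [hsplit, ih2] at this
      linarith
    have heach : ∀ v ∈ B (n + 1), sat F v = l := by
      have h := eq_of_forall_le_of_sum_le hlow hBsum
      intro v hv
      exact h v hv
    constructor
    · intro j hj1 hjn1 u hu
      rcases Nat.lt_or_ge j (n + 1) with hj | hj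
      · exact ih1 j hj1 (by omega) u hu
      · have hj' : j = n + 1 := by omega
        subst hj'
        exact heach u hu
    · have hBsum' : ∑ v ∈ B (n + 1), sat F v = l * ((B (n + 1)).card : ℝ) := by
        rw [Finset.sum_congr rfl heach, Finset.sum_const, nsmul_eq_mul, mul_comm]
      rw [hsplit, ih2, hBsum', hlc]
      ring
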